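/- Let 0 < α < 1, t₀ < t₁, K > 0, and t_{-j} = t₁ - ((α^{-j-1} - 1)/(α^{-1} - 1))·(t₁ - t₀). Then there exists T' < 0 such that for every t ≤ T' the following holds: if j ∈ ℕ is such that t ∈ (t_{-j}, t_{-j+1}], then α^j·K ≤ (2(t₁ - t₀)·K)/((1 - α)·|t|). -/

import Mathlib

/-- Type I bound at -∞: there is T' < 0 such that for all t ≤ T', if
t ∈ (t_{-j}, t_{-j+1}] then α^j K ≤ (2(t₁-t₀)K)/((1-α)|t|). -/
theorem typeI_bound_at_minus_infty (α t₀ t₁ K : ℝ)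
    (hα0 : 0 < α) (hα1 : α < 1) (h01 : t₀ < t₁) (hK : 0 < K) :
    ∃ T' : ℝ, T' < 0 ∧ ∀ t : ℝ, t ≤ T' → ∀ j : ℕ,
      t ∈ Set.Ioc (t₁ - ((α ^ (-(j : ℤ) - 1) - 1) / (α⁻¹ - 1)) * (t₁ - t₀))
          (t₁ - ((α ^ (-((j : ℤ) - 1) - 1) - 1) / (α⁻¹ - 1)) * (t₁ - t₀)) →
        α ^ j * K ≤ (2 * (t₁ - t₀) * K) / ((1 - α) * |t|) := by
  refine ⟨min (-1) (3 * t₁), lt_of_le_of_lt (min_le_left _ _) (by norm_num), ?_⟩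
  intro t ht j hmem
  obtain ⟨h1, _⟩ := hmem
  have ht1 : t ≤ -1 := le_trans ht (min_le_left _ _)
  have ht3 : t ≤ 3 * t₁ := le_trans ht (min_le_right _ _)
  have hainv : (1 : ℝ) < α⁻¹ := (one_lt_inv_iff₀).mpr ⟨hα0, hα1⟩
  have hden : 0 < α⁻¹ - 1 := by linarith
  have ha : (0 : ℝ) < α ^ j := pow_pos hα0 j
  set s : ℝ := (α ^ (-(j : ℤ) - 1) - 1) / (α⁻¹ - 1) with hs
  have hx : α ^ (-(j : ℤ) - 1) = (α ^ j)⁻¹ * α⁻¹ := by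
    rw [zpow_sub₀ hα0.ne', zpow_neg, zpow_natCast, zpow_one]; ring
  -- key bound : s * ((1-α) * α^j) ≤ 1
  have hsle : s * ((1 - α) * α ^ j) ≤ 1 := by
    rw [hs, hx, div_mul_eq_mul_div, div_le_one hden]
    have h1' : (α ^ j)⁻¹ * α⁻¹ * ((1 - α) * α ^ j) = (1 - α) * α⁻¹ := by
      field_simp
    have h2' : α⁻¹ - 1 = (1 - α) * α⁻¹ := by
      field_simp
    nlinarith [mul_pos (sub_pos.mpr hα1) ha]
  have h10 : t₁ - t₀ > 0 := by linarith
  -- s * (t₁ - t₀) is larger than t₁ - t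
  have hlow : t₁ - t < s * (t₁ - t₀) := by linarith
  have hsmul : s * (t₁ - t₀) * ((1 - α) * α ^ j) ≤ t₁ - t₀ := by
    nlinarith [mul_le_mul_of_nonneg_right hsle h10.le]
  -- bound -t₁ * ((1-α) * α^j) ≤ t₁ - t₀
  have hpos : (0 : ℝ) < (1 - α) * α ^ j := mul_pos (by linarith) ha
  have ht₁key : -t₁ * ((1 - α) * α ^ j) ≤ t₁ - t₀ := by
    rcases le_or_gt 0 t₁ with h | h
    · nlinarith
    · have h2t : -2 * t₁ ≤ t₁ - t := by linarith
      have : -2 * t₁ < s * (t₁ - t₀) := lt_of_le_of_lt h2t hlow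
      nlinarith [mul_lt_mul_of_pos_right this hpos]
  -- main: α^j * ((1-α) * (-t)) ≤ 2 * (t₁ - t₀)
  have hfin : α ^ j * ((1 - α) * (-t)) ≤ 2 * (t₁ - t₀) := by
    have hmt : -t < s * (t₁ - t₀) - t₁ := by linarith
    nlinarith [mul_lt_mul_of_pos_right hmt hpos]
  have htneg : t < 0 := by linarith
  rw [abs_of_neg htneg]
  have hdpos : (0 : ℝ) < (1 - α) * -t := mul_pos (by linarith) (by linarith)
  rw [le_div_iff₀ hdpos]
  nlinarith [mul_le_mul_of_nonneg_right hfin hK.le]
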